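/- arXiv:2404.02395 — 2 statements merged into one kernel-verified Lean document; each statement's English description precedes it below -/
import Mathlib

section
/- Suppose batch sizes B_1,...,B_N are nonnegative integers with Σ B_n = B, computing times t_n = ⌈B_n/ρ⌉, and the TDMA iteration time is T = max{ t_N, t_{N-1}+1, ..., t_1 + N−1 } + 1 where the B_n are sorted ascending. If ρ((m−1)N + N(N+1)/2) < B for a positive integer m, then T ≥ m + N + 1. -/
lemma sum_Icc_id_q (N : ℕ) : (∑ n ∈ Finset.Icc 1 N, (n : ℚ)) = N * (N + 1) / 2 := by
  induction N with
  | zero => simp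
  | succ k ih =>
      rw [Finset.sum_Icc_succ_top (by omega : 1 ≤ k + 1), ih]
      push_cast
      ring

/-- TDMA iteration-time lower bound: if `ρ((m−1)N + N(N+1)/2) < B`, then for any
ascending batch allocation `B₁ ≤ ⋯ ≤ B_N` summing to `B`, the TDMA iteration time
`max { ⌈B_N/ρ⌉, ⌈B_{N−1}/ρ⌉+1, ..., ⌈B₁/ρ⌉+N−1 } + 1` is at least `m + N + 1`. -/
theorem tdma_iteration_time_lower_bound
    (N ρ Btot m : ℕ) (hN : 1 ≤ N) (hρ : 0 < ρ) (hm : 1 ≤ m)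
    (hB : (ρ : ℚ) * (((m : ℚ) - 1) * N + N * (N + 1) / 2) < (Btot : ℚ))
    (B : ℕ → ℕ)
    (hsum : ∑ n ∈ Finset.Icc 1 N, B n = Btot)
    (hsorted : ∀ n n', 1 ≤ n → n ≤ n' → n' ≤ N → B n ≤ B n')
    (t : ℕ → ℕ) (ht : ∀ n, t n = ⌈(B n : ℚ) / ρ⌉₊)
    (T : ℕ) (hT : T = (Finset.Icc 1 N).sup (fun n => t n + (N - n)) + 1) :
    m + N + 1 ≤ T := by
  by_contra h
  push_neg at h
  have hsup : (Finset.Icc 1 N).sup (fun n => t n + (N - n)) ≤ m + N - 1 := by omega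
  have hρQ : (0 : ℚ) < (ρ : ℚ) := by exact_mod_cast hρ
  have key : ∀ n ∈ Finset.Icc 1 N, (B n : ℚ) ≤ (ρ : ℚ) * ((m : ℚ) + n - 1) := by
    intro n hn
    simp only [Finset.mem_Icc] at hn
    have h1 : t n + (N - n) ≤ m + N - 1 :=
      le_trans (Finset.le_sup (f := fun n => t n + (N - n))
        (Finset.mem_Icc.mpr hn)) hsup
    have h2 : t n ≤ m + n - 1 := by omega
    have h3 : ⌈(B n : ℚ) / ρ⌉₊ ≤ m + n - 1 := by rw [← ht]; exact h2
    have h4 : (B n : ℚ) / ρ ≤ ((m + n - 1 : ℕ) : ℚ) :=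
      le_trans (Nat.le_ceil _) (by exact_mod_cast h3)
    have h5 : ((m + n - 1 : ℕ) : ℚ) = (m : ℚ) + n - 1 := by
      rw [show m + n - 1 = (m - 1) + n from by omega, Nat.cast_add, Nat.cast_sub hm]
      push_cast; ring
    rw [h5] at h4
    calc (B n : ℚ) = (B n : ℚ) / ρ * ρ := by field_simp
    _ ≤ ((m : ℚ) + n - 1) * ρ := by
        exact mul_le_mul_of_nonneg_right h4 (le_of_lt hρQ)
    _ = (ρ : ℚ) * ((m : ℚ) + n - 1) := by ring
  have hsumle : (Btot : ℚ) ≤ ∑ n ∈ Finset.Icc 1 N, (ρ : ℚ) * ((m : ℚ) + n - 1) := by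
    rw [← hsum, Nat.cast_sum]
    exact Finset.sum_le_sum key
  have hcomp : (∑ n ∈ Finset.Icc 1 N, (ρ : ℚ) * ((m : ℚ) + n - 1))
      = (ρ : ℚ) * (((m : ℚ) - 1) * N + N * (N + 1) / 2) := by
    rw [← Finset.mul_sum]
    congr 1
    rw [Finset.sum_sub_distrib, Finset.sum_add_distrib, sum_Icc_id_q,
      Finset.sum_const, Finset.sum_const]
    have hcard : (Finset.Icc 1 N).card = N := by rw [Nat.card_Icc]; omega
    rw [hcard, nsmul_eq_mul]
    ring
  rw [hcomp] at hsumle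
  linarith
end

section
/- In the two-device TDMA model with total batch B and per-slot computing rate ρ, if B ≤ ρ(2m + 3) and batch allocation B₁ = ρ(m+1), B₂ = B − B₁ (so long as B₂ ≤ ρ(m+2)), then the iteration time max{⌈B₂/ρ⌉, ⌈B₁/ρ⌉ + 1} + 1 equals m + 3, which is the minimum over all allocations with B₁ + B₂ = B when B > ρ(2m + 1). -/
lemma tdma_ceil_le_iff (a ρ k : ℕ) (hρ : 0 < ρ) :
    ⌈(a : ℚ) / ρ⌉₊ ≤ k ↔ a ≤ ρ * k := by
  rw [Nat.ceil_le, div_le_iff₀ (by exact_mod_cast hρ)]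
  rw [show ((k : ℚ) * ρ) = ((ρ * k : ℕ) : ℚ) by push_cast; ring]
  exact Nat.cast_le

/-- Two-device TDMA: with `ρ(2(m−1)+3) < B ≤ ρ(2m+3)` and the step-wise allocation
`B₁ = ρ(m+1)`, `B₂ = B − B₁` (with `B₂ ≤ ρ(m+2)`), the iteration time
`max{⌈B₂/ρ⌉, ⌈B₁/ρ⌉+1} + 1` equals `m + 3`, and this is minimal among all
allocations `B₁' + B₂' = B` with `B₁' ≤ B₂'`. -/
theorem tdma_two_device_optimal
    (ρ B m : ℕ) (hρ : 0 < ρ) (hB : 0 < B) (hm : 1 ≤ m)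
    (hlow : ρ * (2 * (m - 1) + 3) < B) (hhigh : B ≤ ρ * (2 * m + 3))
    (B₁ B₂ : ℕ) (hB₁ : B₁ = ρ * (m + 1)) (hB₂ : B₂ = B - B₁)
    (hB₂le : B₂ ≤ ρ * (m + 2)) :
    max ⌈(B₂ : ℚ) / ρ⌉₊ (⌈(B₁ : ℚ) / ρ⌉₊ + 1) + 1 = m + 3 ∧
    ∀ B₁' B₂' : ℕ, B₁' + B₂' = B → B₁' ≤ B₂' →
      m + 3 ≤ max ⌈(B₂' : ℚ) / ρ⌉₊ (⌈(B₁' : ℚ) / ρ⌉₊ + 1) + 1 := by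
  have hlow' : ρ * (2 * m + 1) < B := by
    have h : 2 * (m - 1) + 3 = 2 * m + 1 := by omega
    rwa [h] at hlow
  have hc1 : ⌈(B₁ : ℚ) / ρ⌉₊ = m + 1 := by
    have : (B₁ : ℚ) / ρ = ((m + 1 : ℕ) : ℚ) := by
      rw [hB₁]; push_cast
      field_simp
    rw [this, Nat.ceil_natCast]
  have hc2 : ⌈(B₂ : ℚ) / ρ⌉₊ ≤ m + 2 := (tdma_ceil_le_iff B₂ ρ (m + 2) hρ).2 hB₂le
  constructor
  · rw [hc1]
    omega
  · intro B₁' B₂' hsum hle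
    by_contra h
    push_neg at h
    have h2 : ⌈(B₂' : ℚ) / ρ⌉₊ ≤ m + 1 := by omega
    have h1 : ⌈(B₁' : ℚ) / ρ⌉₊ ≤ m := by omega
    have h2' : B₂' ≤ ρ * (m + 1) := (tdma_ceil_le_iff B₂' ρ (m + 1) hρ).1 h2
    have h1' : B₁' ≤ ρ * m := (tdma_ceil_le_iff B₁' ρ m hρ).1 h1
    have : B ≤ ρ * (2 * m + 1) := by
      rw [← hsum]
      nlinarith
    omega
end
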